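/- Let ν ∈ ℝ₊ⁿ with Σᵢνᵢ = 1 and νᵢ > 0 for all i, and p ∈ ℝ₊ⁿ, K ∈ ℝ₊ⁿ. Define the discrete distribution π on ℝ₊ⁿ placing mass νᵢ at the point x(i) whose i-th coordinate is pᵢ/νᵢ + Kᵢ and whose other coordinates are 0. Then E_π[(x_j − K_j)₊] = p_j for every j, and for any w > 0, K₀ ≥ 0: E_π[(wᵀx − K₀)₊] = Σᵢ ( wᵢpᵢ − νᵢ(K₀ − wᵢKᵢ) )₊. -/

import Mathlib

open MeasureTheory Filter

lemma integral_sum_smul_dirac {n : ℕ} (c : Fin n → ℝ) (hc : ∀ i, 0 ≤ c i)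
    (x : Fin n → (Fin n → ℝ)) (f : (Fin n → ℝ) → ℝ) (hf : Measurable f) :
    ∫ a, f a ∂(∑ i, ENNReal.ofReal (c i) • Measure.dirac (x i)) = ∑ i, c i * f (x i) := by
  have hint : ∀ i : Fin n, Integrable f (Measure.dirac (x i)) := by
    intro i
    refine ⟨hf.aestronglyMeasurable, ?_⟩
    simp [HasFiniteIntegral, lintegral_dirac]
  rw [integral_finset_sum_measure (fun i _ => (hint i).smul_measure ENNReal.ofReal_ne_top)]
  refine Finset.sum_congr rfl fun i _ => ?_
  rw [integral_smul_measure, integral_dirac]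
  simp [ENNReal.toReal_ofReal (hc i)]

theorem discrete_lower_bound_measure {n : ℕ} (ν p K w : Fin n → ℝ) (K0 : ℝ)
    (hν : ∀ i, 0 < ν i) (hsum : ∑ i, ν i = 1) (hp : ∀ i, 0 ≤ p i)
    (hK : ∀ i, 0 ≤ K i) (hw : ∀ i, 0 < w i) (hK0 : 0 ≤ K0) :
    let π : Measure (Fin n → ℝ) :=
      ∑ i, ENNReal.ofReal (ν i) • Measure.dirac (Pi.single i (p i / ν i + K i))
    (∀ j, ∫ x, max (x j - K j) 0 ∂π = p j) ∧
    ∫ x, max (∑ i, w i * x i - K0) 0 ∂π =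
      ∑ i, max (w i * p i - ν i * (K0 - w i * K i)) 0 := by
  intro π
  have hνle : ∀ i, 0 ≤ ν i := fun i => (hν i).le
  constructor
  · intro j
    have hm : Measurable (fun x : Fin n → ℝ => max (x j - K j) 0) :=
      ((measurable_pi_apply j).sub measurable_const).max measurable_const
    rw [show π = _ from rfl, integral_sum_smul_dirac ν hνle _ _ hm]
    rw [Finset.sum_eq_single j]
    · rw [Pi.single_eq_same]
      have h1 : p j / ν j + K j - K j = p j / ν j := by ring
      rw [h1, max_eq_left (div_nonneg (hp j) (hνle j))]
      rw [mul_comm, div_mul_cancel₀ _ (hν j).ne']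
    · intro i _ hij
      rw [Pi.single_eq_of_ne (Ne.symm hij), zero_sub,
        max_eq_right (neg_nonpos.mpr (hK j)), mul_zero]
    · intro h; exact absurd (Finset.mem_univ j) h
  · have hm : Measurable (fun x : Fin n → ℝ => max (∑ i, w i * x i - K0) 0) := by
      refine Measurable.max ?_ measurable_const
      exact (Finset.measurable_sum (f := fun (i : Fin n) (x : Fin n → ℝ) => w i * x i) _ fun i _ =>
        by fun_prop).sub measurable_const
    rw [show π = _ from rfl, integral_sum_smul_dirac ν hνle _ _ hm]
    refine Finset.sum_congr rfl fun i _ => ?_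
    have hsum2 : ∑ k, w k * (Pi.single i (p i / ν i + K i) : Fin n → ℝ) k = w i * (p i / ν i + K i) := by
      rw [Finset.sum_eq_single i]
      · rw [Pi.single_eq_same]
      · intro k _ hk; simp [Pi.single_apply, hk]
      · intro h; exact absurd (Finset.mem_univ i) h
    rw [hsum2, mul_max_of_nonneg _ _ (hνle i), mul_zero]
    congr 1
    field_simp [(hν i).ne']
    ring
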